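/- Consider the combined framework: a finite set T, a symmetric irreflexive conflict relation C ⊆ T × T (from FDs), and a support system (T, L, src, supp) with singleton support sets (from IDs). Define the AF with arguments T ∪ {a_{ℓ,s}}, FD-attacks (s,t) and (t,s) for (s,t) ∈ C, and ID-attacks (a_{ℓ,s}, s), (a_{ℓ,s}, a_{ℓ,s}), and (u, a_{ℓ,s}) for u ∈ supp(ℓ,s). Then P ⊆ T is a subset-maximal repair (maximal subset that is independent w.r.t. C and closed w.r.t. the support system) if and only if P is a preferred extension of this AF. -/

import Mathlib

def ConflictFree {A : Type} (R : A → A → Prop) (S : Set A) : Prop :=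
  ∀ a ∈ S, ∀ b ∈ S, ¬ R a b

def Defends {A : Type} (R : A → A → Prop) (S : Set A) (c : A) : Prop :=
  ∀ b, R b c → ∃ a ∈ S, R a b

def Admissible {A : Type} (R : A → A → Prop) (S : Set A) : Prop :=
  ConflictFree R S ∧ ∀ c ∈ S, Defends R S c

def Naive {A : Type} (R : A → A → Prop) (S : Set A) : Prop :=
  ConflictFree R S ∧ ∀ S', ConflictFree R S' → S ⊆ S' → S' = S

def Preferred {A : Type} (R : A → A → Prop) (S : Set A) : Prop :=
  Admissible R S ∧ ∀ S', Admissible R S' → S ⊆ S' → S' = S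

/-- Auxiliary arguments `a_{ℓ,s}` for `ℓ ∈ L` and `s ∈ src ℓ`. -/
def Aux {L T : Type} (src : L → Set T) : Type :=
  {p : L × T // p.2 ∈ src p.1}

/-- Arguments of the combined FD+ID framework: facts plus auxiliary arguments. -/
def CArg {L T : Type} (src : L → Set T) : Type :=
  T ⊕ Aux src

/-- Attacks of the combined FD+ID framework: FD-attacks `(s,t)` for conflicting
facts, ID-attacks `(a_{ℓ,s}, s)`, self-attacks `(a_{ℓ,s}, a_{ℓ,s})`, and
`(u, a_{ℓ,s})` for every single supporting fact `u ∈ supp ℓ s`. -/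
def CAtt {L T : Type} (src : L → Set T) (C : T → T → Prop)
    (supp : L → T → Set T) : CArg src → CArg src → Prop
  | Sum.inl s, Sum.inl t => C s t
  | Sum.inr a, Sum.inl t => t = a.1.2
  | Sum.inl u, Sum.inr a => u ∈ supp a.1.1 a.1.2
  | Sum.inr a, Sum.inr b => a = b

/-- A repair in the combined FD+ID setting: a maximal subset that is
independent w.r.t. the conflict relation and closed w.r.t. the support system. -/
def CRepair {L T : Type} (src : L → Set T) (C : T → T → Prop)
    (supp : L → T → Set T) (P : Set T) : Prop :=
  ((∀ s ∈ P, ∀ t ∈ P, ¬ C s t) ∧ ∀ ℓ, ∀ s ∈ P, s ∈ src ℓ → ∃ u ∈ supp ℓ s, u ∈ P) ∧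
  ∀ P', ((∀ s ∈ P', ∀ t ∈ P', ¬ C s t) ∧
      ∀ ℓ, ∀ s ∈ P', s ∈ src ℓ → ∃ u ∈ supp ℓ s, u ∈ P') → P ⊆ P' → P' = P


lemma adm_of_closed {L T : Type} (src : L → Set T) (C : T → T → Prop)
    (supp : L → T → Set T) (hsym : ∀ s t, C s t ↔ C t s) (P : Set T)
    (h1 : ∀ s ∈ P, ∀ t ∈ P, ¬ C s t)
    (h2 : ∀ ℓ, ∀ s ∈ P, s ∈ src ℓ → ∃ u ∈ supp ℓ s, u ∈ P) :
    Admissible (CAtt src C supp) ((Sum.inl : T → CArg src) '' P) := by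
  constructor
  · rintro _ ⟨s, hs, rfl⟩ _ ⟨t, ht, rfl⟩
    exact h1 s hs t ht
  · rintro _ ⟨t, ht, rfl⟩ b hb
    cases b with
    | inl u => exact ⟨Sum.inl t, ⟨t, ht, rfl⟩, (hsym t u).mpr hb⟩
    | inr a =>
        have hb' : t = a.1.2 := hb
        subst hb'
        obtain ⟨u, hu, huP⟩ := h2 a.1.1 a.1.2 ht a.2
        exact ⟨Sum.inl u, ⟨u, huP, rfl⟩, hu⟩

/-- In the combined FD+ID framework, the subset-maximal repairs are exactly the
preferred extensions of the generated AF. -/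
theorem stmt16 {L T : Type} [Fintype L] [Fintype T]
    (src : L → Set T) (C : T → T → Prop) (supp : L → T → Set T)
    (hsym : ∀ s t, C s t ↔ C t s) (hirr : ∀ s, ¬ C s s) (P : Set T) :
    CRepair src C supp P ↔
      Preferred (CAtt src C supp) ((Sum.inl : T → CArg src) '' P) := by
  constructor
  · rintro ⟨⟨h1, h2⟩, hmax⟩
    refine ⟨adm_of_closed src C supp hsym P h1 h2, ?_⟩
    intro S' hS' hsub
    have hnoinr : ∀ a : Aux src, Sum.inr a ∉ S' := by
      intro a ha
      exact hS'.1 _ ha _ ha rfl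
    set P' : Set T := {t | Sum.inl t ∈ S'} with hP'
    have hSeq : S' = (Sum.inl : T → CArg src) '' P' := by
      ext x
      cases x with
      | inl t =>
          constructor
          · intro h; exact ⟨t, h, rfl⟩
          · rintro ⟨u, hu, h⟩; cases h; exact hu
      | inr a =>
          constructor
          · intro h; exact absurd h (hnoinr a)
          · rintro ⟨u, _, h⟩; cases h
    have hc1 : ∀ s ∈ P', ∀ t ∈ P', ¬ C s t := fun s hs t ht => hS'.1 _ hs _ ht
    have hc2 : ∀ ℓ, ∀ s ∈ P', s ∈ src ℓ → ∃ u ∈ supp ℓ s, u ∈ P' := by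
      intro ℓ s hs hsrc
      obtain ⟨x, hx, hatt⟩ := hS'.2 _ hs (Sum.inr ⟨(ℓ, s), hsrc⟩) rfl
      cases x with
      | inl u => exact ⟨u, hatt, hx⟩
      | inr b => exact absurd hx (hnoinr b)
    have hPsub : P ⊆ P' := fun t ht => hsub ⟨t, ht, rfl⟩
    rw [hSeq, hmax P' ⟨hc1, hc2⟩ hPsub]
    exact rfl
  · rintro ⟨hadm, hmax⟩
    have h1 : ∀ s ∈ P, ∀ t ∈ P, ¬ C s t := fun s hs t ht =>
      hadm.1 _ ⟨s, hs, rfl⟩ _ ⟨t, ht, rfl⟩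
    have h2 : ∀ ℓ, ∀ s ∈ P, s ∈ src ℓ → ∃ u ∈ supp ℓ s, u ∈ P := by
      intro ℓ s hs hsrc
      obtain ⟨x, hx, hatt⟩ := hadm.2 _ ⟨s, hs, rfl⟩ (Sum.inr ⟨(ℓ, s), hsrc⟩) rfl
      obtain ⟨u, hu, rfl⟩ := hx
      exact ⟨u, hatt, hu⟩
    refine ⟨⟨h1, h2⟩, ?_⟩
    rintro P' ⟨h1', h2'⟩ hsub
    have heq := hmax ((Sum.inl : T → CArg src) '' P')
      (adm_of_closed src C supp hsym P' h1' h2') (Set.image_mono hsub)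
    exact Sum.inl_injective.image_injective heq
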